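/- Suppose τ̂ is a real random variable with τ̂ ∼ N(τ + b, σ²) where the bias b satisfies |b| ≤ b̄ for a known bound b̄ ≥ 0 and σ > 0 is known. Let z_α(r) denote the 1−α quantile of |N(r,1)|. Then the interval [τ̂ − z_α(b̄/σ)·σ, τ̂ + z_α(b̄/σ)·σ] covers τ with probability at least 1 − α. -/

import Mathlib

open MeasureTheory ProbabilityTheory

private lemma gauss_cont (m : ℝ) : Continuous (gaussianPDFReal m 1) := by
  unfold gaussianPDFReal
  fun_prop

private lemma gauss_shift (t : ℝ) (c : ℝ) :
    ∫ x in (-c)..c, gaussianPDFReal t 1 x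
      = ∫ x in (-c - t)..(c - t), gaussianPDFReal 0 1 x := by
  have h : ∀ x : ℝ, gaussianPDFReal t 1 x = gaussianPDFReal 0 1 (x - t) := by
    intro x
    rw [gaussianPDFReal_sub, zero_add]
  simp_rw [h]
  exact intervalIntegral.integral_comp_sub_right (gaussianPDFReal 0 1) t

private lemma gauss_sym (m c : ℝ) :
    ∫ x in (-c)..c, gaussianPDFReal (-m) 1 x = ∫ x in (-c)..c, gaussianPDFReal m 1 x := by
  have h : ∀ x : ℝ, gaussianPDFReal (-m) 1 x = gaussianPDFReal m 1 (-x) := by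
    intro x
    simp only [gaussianPDFReal]
    congr 2
    ring
  simp_rw [h]
  rw [intervalIntegral.integral_comp_neg (fun x => gaussianPDFReal m 1 x), neg_neg]

private lemma core_mono {c m r : ℝ} (hc : 0 ≤ c) (hm : 0 ≤ m) (hmr : m ≤ r) :
    ∫ x in (-c)..c, gaussianPDFReal r 1 x ≤ ∫ x in (-c)..c, gaussianPDFReal m 1 x := by
  set f := gaussianPDFReal 0 1 with hf
  have hfc : Continuous f := gauss_cont 0
  have hint : ∀ a b : ℝ, IntervalIntegrable f volume a b := fun a b => hfc.intervalIntegrable a b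
  rw [gauss_shift, gauss_shift]
  have h1 : (∫ x in (-c - r)..(c - r), f x) + ∫ x in (c - r)..(c - m), f x
      = ∫ x in (-c - r)..(c - m), f x :=
    intervalIntegral.integral_add_adjacent_intervals (hint _ _) (hint _ _)
  have h2 : (∫ x in (-c - r)..(-c - m), f x) + ∫ x in (-c - m)..(c - m), f x
      = ∫ x in (-c - r)..(c - m), f x :=
    intervalIntegral.integral_add_adjacent_intervals (hint _ _) (hint _ _)
  have h3 : ∫ x in (c - r)..(c - m), f (x - 2 * c) = ∫ x in (-c - r)..(-c - m), f x := by
    rw [intervalIntegral.integral_comp_sub_right f (2 * c)]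
    congr 1 <;> ring
  have h4 : ∫ x in (c - r)..(c - m), f (x - 2 * c) ≤ ∫ x in (c - r)..(c - m), f x := by
    apply intervalIntegral.integral_mono_on (by linarith)
    · exact (hfc.comp (continuous_id.sub continuous_const)).intervalIntegrable _ _
    · exact hint _ _
    · intro x hx
      have hx2 : x ≤ c := by
        have := hx.2
        linarith
      simp only [hf, gaussianPDFReal]
      apply mul_le_mul_of_nonneg_left _ (by positivity)
      apply Real.exp_le_exp.2
      rw [NNReal.coe_one, div_le_div_iff_of_pos_right (by norm_num : (0:ℝ) < 2 * 1)]
      nlinarith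
  linarith

private lemma gauss_Icc (m : ℝ) {c : ℝ} (hc0 : 0 ≤ c) :
    ((gaussianReal m 1) {x : ℝ | |x| ≤ c}).toReal = ∫ x in (-c)..c, gaussianPDFReal m 1 x := by
  have hc : -c ≤ c := by linarith
  have hs : {x : ℝ | |x| ≤ c} = Set.Icc (-c) c := by
    ext x; simp [abs_le]
  rw [hs, gaussianReal_apply_eq_integral m one_ne_zero,
    ENNReal.toReal_ofReal
      (setIntegral_nonneg measurableSet_Icc fun x _ => gaussianPDFReal_nonneg m 1 x),
    MeasureTheory.integral_Icc_eq_integral_Ioc, intervalIntegral.integral_of_le hc]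

/-- Bias-aware confidence interval validity: if τ̂ ∼ N(τ+b, σ²)
with |b| ≤ b̄ and z_α(r) is the 1−α quantile of |N(r,1)|, then the interval
[τ̂ ± z_α(b̄/σ)·σ] covers τ with probability at least 1 − α. -/
theorem stmt16 {Ω : Type*} [MeasurableSpace Ω] (μ : Measure Ω) [IsProbabilityMeasure μ]
    (τ b σ bbar α : ℝ) (hσ : 0 < σ) (hbbar : 0 ≤ bbar) (hb : |b| ≤ bbar)
    (hα0 : 0 < α) (hα1 : α < 1)
    (tauhat : Ω → ℝ)
    (hdist : μ.map tauhat = gaussianReal (τ + b) (⟨σ ^ 2, sq_nonneg σ⟩ : NNReal))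
    (z : ℝ → ℝ)
    (hz : ∀ r : ℝ, ((gaussianReal r 1) {x | |x| ≤ z r}).toReal = 1 - α) :
    1 - α ≤ (μ {ω | |tauhat ω - τ| ≤ z (bbar / σ) * σ}).toReal := by
  set c := z (bbar / σ) with hcdef
  set r := bbar / σ with hrdef
  set m := b / σ with hmdef
  -- c ≥ 0
  have hc0 : 0 ≤ c := by
    by_contra hc
    push_neg at hc
    have h := hz r
    have hempty : {x : ℝ | |x| ≤ c} = (∅ : Set ℝ) := by
      ext x
      simp only [Set.mem_setOf_eq, Set.mem_empty_iff_false, iff_false, not_le]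
      exact lt_of_lt_of_le hc (abs_nonneg x)
    rw [hempty] at h
    simp at h
    linarith
  have hmr : |m| ≤ r := by
    rw [hmdef, hrdef, abs_div, abs_of_pos hσ]
    exact (div_le_div_iff_of_pos_right hσ).mpr hb
  -- core inequality at |m|
  have hkey0 := core_mono hc0 (abs_nonneg m) hmr
  have habs : ∫ x in (-c)..c, gaussianPDFReal |m| 1 x = ∫ x in (-c)..c, gaussianPDFReal m 1 x := by
    rcases le_or_gt 0 m with h | h
    · rw [abs_of_nonneg h]
    · rw [abs_of_neg h]
      exact gauss_sym m c
  have hkey : ∫ x in (-c)..c, gaussianPDFReal r 1 x ≤ ∫ x in (-c)..c, gaussianPDFReal m 1 x := by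
    rw [← habs]; exact hkey0
  -- measurability of tauhat
  have hmeas : AEMeasurable tauhat μ := by
    by_contra h
    rw [Measure.map_of_not_aemeasurable h] at hdist
    have h1 : (gaussianReal (τ + b) (⟨σ ^ 2, sq_nonneg σ⟩ : NNReal)) Set.univ = 1 :=
      (instIsProbabilityMeasureGaussianReal _ _).measure_univ
    rw [← hdist] at h1
    simp at h1
  have hsmeas : MeasurableSet {x : ℝ | |x - τ| ≤ c * σ} := by
    have hset : {x : ℝ | |x - τ| ≤ c * σ} = Set.Icc (τ - c * σ) (τ + c * σ) := by
      ext x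
      simp only [Set.mem_setOf_eq, Set.mem_Icc, abs_le]
      constructor <;> (rintro ⟨h1, h2⟩; constructor <;> linarith)
    rw [hset]; exact measurableSet_Icc
  have hμeq : μ {ω | |tauhat ω - τ| ≤ c * σ} = (μ.map tauhat) {x | |x - τ| ≤ c * σ} := by
    rw [Measure.map_apply_of_aemeasurable hmeas hsmeas]
    rfl
  -- decomposition of the gaussian
  have hdecomp : gaussianReal (τ + b) (⟨σ ^ 2, sq_nonneg σ⟩ : NNReal)
      = ((gaussianReal m 1).map (σ * ·)).map (· + τ) := by
    rw [gaussianReal_map_const_mul, gaussianReal_map_add_const]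
    have hmean : σ * m + τ = τ + b := by
      rw [hmdef]
      field_simp
      ring
    have hvar : (⟨σ ^ 2, sq_nonneg σ⟩ : NNReal) * 1 = (⟨σ ^ 2, sq_nonneg σ⟩ : NNReal) := mul_one _
    rw [hmean]
    exact congrArg _ hvar.symm
  have hpre1 : MeasurableSet ((· + τ) ⁻¹' {x : ℝ | |x - τ| ≤ c * σ}) :=
    hsmeas.preimage (measurable_add_const τ)
  have happ : (gaussianReal (τ + b) (⟨σ ^ 2, sq_nonneg σ⟩ : NNReal)) {x | |x - τ| ≤ c * σ}
      = (gaussianReal m 1) {x | |x| ≤ c} := by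
    rw [hdecomp, Measure.map_apply (measurable_add_const τ) hsmeas,
      Measure.map_apply (measurable_const_mul σ) hpre1]
    congr 1
    ext x
    simp only [Set.mem_preimage, Set.mem_setOf_eq, add_sub_cancel_right, abs_mul,
      abs_of_pos hσ]
    constructor <;> intro h <;> nlinarith [abs_nonneg x]
  calc 1 - α = ((gaussianReal r 1) {x | |x| ≤ c}).toReal := (hz r).symm
    _ = ∫ x in (-c)..c, gaussianPDFReal r 1 x := gauss_Icc r hc0
    _ ≤ ∫ x in (-c)..c, gaussianPDFReal m 1 x := hkey
    _ = ((gaussianReal m 1) {x | |x| ≤ c}).toReal := (gauss_Icc m hc0).symm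
    _ = ((gaussianReal (τ + b) (⟨σ ^ 2, sq_nonneg σ⟩ : NNReal)) {x | |x - τ| ≤ c * σ}).toReal := by
        rw [happ]
    _ = (μ {ω | |tauhat ω - τ| ≤ c * σ}).toReal := by rw [hμeq, hdist]
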